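/- arXiv:1809.01742 — 2 statements merged into one kernel-verified Lean document; each statement's English description precedes it below -/
import Mathlib

section
/- Let (X,𝒜,μ) be a σ-finite measure space, let γ>0, let w ∈ L²(μ) with w ≥ 0 a.e., and let A : X → ℝ be measurable with 0 ≤ A ≤ γ² a.e. Assume that ‖w‖_{L²(μ)} ≤ γ^{−2} ‖(γ² − A) w‖_{L²(μ)}, and that for every κ > 0 there exists ζ(κ) > 0 such that A ≥ ζ(κ) a.e. on the set {w ≥ κ}. Then w = 0 μ-a.e. -/
open MeasureTheory

lemma sq_eLpNorm_aux {X : Type*} [MeasurableSpace X] (μ : Measure X) (g : X → ℝ) :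
    eLpNorm g 2 μ ^ 2 = ∫⁻ x, ENNReal.ofReal ((g x) ^ 2) ∂μ := by
  rw [eLpNorm_eq_lintegral_rpow_enorm_toReal two_ne_zero ENNReal.ofNat_ne_top]
  simp only [ENNReal.toReal_ofNat]
  rw [← ENNReal.rpow_natCast _ 2, ← ENNReal.rpow_mul]
  norm_num
  congr 1
  ext x
  rw [Real.enorm_eq_ofReal_abs, ← ENNReal.ofReal_pow (abs_nonneg _), sq_abs]

/-- If `w ∈ L²(μ)` is nonnegative, `0 ≤ A ≤ γ²` a.e.,
`‖w‖_{L²} ≤ γ^{-2} ‖(γ² - A) w‖_{L²}`, and for every `κ > 0` the coefficient `A`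
is bounded below by some `ζ(κ) > 0` a.e. on `{w ≥ κ}`, then `w = 0` a.e. -/
theorem stmt_10 {X : Type*} [MeasurableSpace X] (μ : Measure X) [SigmaFinite μ]
    (γ : ℝ) (hγ : 0 < γ) (w A : X → ℝ)
    (hw : MemLp w 2 μ) (hwnn : ∀ᵐ x ∂μ, 0 ≤ w x)
    (hAmeas : Measurable A)
    (hAbd : ∀ᵐ x ∂μ, 0 ≤ A x ∧ A x ≤ γ ^ 2)
    (hnorm : eLpNorm w 2 μ
      ≤ ENNReal.ofReal (γ ^ 2)⁻¹ * eLpNorm (fun x => (γ ^ 2 - A x) * w x) 2 μ)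
    (hζ : ∀ κ : ℝ, 0 < κ → ∃ ζ : ℝ, 0 < ζ ∧ ∀ᵐ x ∂μ, κ ≤ w x → ζ ≤ A x) :
    w =ᵐ[μ] 0 := by
  have hγ2 : (0:ℝ) < γ ^ 2 := by positivity
  set f : X → ℝ := fun x => (γ ^ 2 - A x) * w x with hf_def
  have hfm : AEStronglyMeasurable f μ :=
    ((measurable_const.sub hAmeas).aestronglyMeasurable).mul hw.1
  -- pointwise bound on f²
  have hptbd : ∀ᵐ x ∂μ, (f x) ^ 2 ≤ γ ^ 4 * (w x) ^ 2 := by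
    filter_upwards [hAbd] with x ⟨h0, h1⟩
    have : (γ ^ 2 - A x) ^ 2 ≤ (γ ^ 2) ^ 2 := by nlinarith
    calc (f x) ^ 2 = (γ ^ 2 - A x) ^ 2 * (w x) ^ 2 := by ring
      _ ≤ (γ ^ 2) ^ 2 * (w x) ^ 2 := by nlinarith [sq_nonneg (w x)]
      _ = γ ^ 4 * (w x) ^ 2 := by ring
  set φ : X → ENNReal := fun x => ENNReal.ofReal (γ ^ 4 * (w x) ^ 2) with hφ_def
  set ψ : X → ENNReal := fun x => ENNReal.ofReal ((f x) ^ 2) with hψ_def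
  have hψleφ : ∀ᵐ x ∂μ, ψ x ≤ φ x := by
    filter_upwards [hptbd] with x h
    exact ENNReal.ofReal_le_ofReal h
  have hφmeas : AEMeasurable φ μ :=
    (ENNReal.measurable_ofReal.comp_aemeasurable
      (aemeasurable_const.mul ((hw.1.aemeasurable).pow aemeasurable_const)))
  have hψmeas : AEMeasurable ψ μ :=
    (ENNReal.measurable_ofReal.comp_aemeasurable
      ((hfm.aemeasurable).pow aemeasurable_const))
  -- ∫φ in terms of eLpNorm
  have hφint : ∫⁻ x, φ x ∂μ = ENNReal.ofReal (γ ^ 4) * eLpNorm w 2 μ ^ 2 := by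
    rw [sq_eLpNorm_aux, ← lintegral_const_mul' _ _ ENNReal.ofReal_ne_top]
    refine lintegral_congr fun x => ?_
    rw [← ENNReal.ofReal_mul (by positivity)]
  have hφfin : ∫⁻ x, φ x ∂μ ≠ ⊤ := by
    rw [hφint]
    exact ENNReal.mul_ne_top ENNReal.ofReal_ne_top (by
      exact ENNReal.pow_ne_top hw.eLpNorm_ne_top)
  have hψfin : ∫⁻ x, ψ x ∂μ ≠ ⊤ :=
    ne_top_of_le_ne_top hφfin (lintegral_mono_ae hψleφ)
  -- from hnorm: ∫φ ≤ ∫ψ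
  have hle : ∫⁻ x, φ x ∂μ ≤ ∫⁻ x, ψ x ∂μ := by
    have h2 : eLpNorm w 2 μ ^ 2
        ≤ ENNReal.ofReal ((γ ^ 2)⁻¹) ^ 2 * eLpNorm f 2 μ ^ 2 := by
      rw [← mul_pow]
      exact pow_le_pow_left' hnorm 2
    rw [hφint, ← sq_eLpNorm_aux μ f]
    calc ENNReal.ofReal (γ ^ 4) * eLpNorm w 2 μ ^ 2
        ≤ ENNReal.ofReal (γ ^ 4) * (ENNReal.ofReal ((γ ^ 2)⁻¹) ^ 2 * eLpNorm f 2 μ ^ 2) := by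
          exact mul_le_mul_right h2 _
      _ = (ENNReal.ofReal (γ ^ 4) * ENNReal.ofReal ((γ ^ 2)⁻¹) ^ 2) * eLpNorm f 2 μ ^ 2 := by
          ring
      _ = eLpNorm f 2 μ ^ 2 := by
          rw [← ENNReal.ofReal_pow (by positivity), ← ENNReal.ofReal_mul (by positivity)]
          rw [show γ ^ 4 * ((γ ^ 2)⁻¹) ^ 2 = 1 by field_simp, ENNReal.ofReal_one, one_mul]
  have hint_eq : ∫⁻ x, φ x ∂μ = ∫⁻ x, ψ x ∂μ :=
    le_antisymm hle (lintegral_mono_ae hψleφ)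
  -- conclude φ = ψ a.e.
  have hsub0 : ∫⁻ x, (φ x - ψ x) ∂μ = 0 := by
    rw [lintegral_sub' hψmeas hψfin hψleφ, hint_eq, tsub_self]
  have hae : ∀ᵐ x ∂μ, φ x - ψ x = 0 :=
    (lintegral_eq_zero_iff' (hφmeas.sub hψmeas)).1 hsub0
  have hkey : ∀ᵐ x ∂μ, γ ^ 4 * (w x) ^ 2 ≤ (f x) ^ 2 := by
    filter_upwards [hae] with x h
    have hle' : φ x ≤ ψ x := tsub_eq_zero_iff_le.1 h
    exact (ENNReal.ofReal_le_ofReal_iff (by positivity : (0:ℝ) ≤ (f x)^2)).1 hle'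
  -- for each n, w < (n+1)⁻¹ a.e.
  have hsmall : ∀ n : ℕ, ∀ᵐ x ∂μ, ¬ ((n + 1 : ℝ)⁻¹ ≤ w x) := by
    intro n
    obtain ⟨ζ, hζ0, hζa⟩ := hζ (n + 1 : ℝ)⁻¹ (by positivity)
    filter_upwards [hζa, hkey, hAbd] with x h1 h2 h3 hcon
    have hwx : 0 < w x := lt_of_lt_of_le (by positivity) hcon
    have hA : ζ ≤ A x := h1 hcon
    have h4 : γ ^ 4 ≤ (γ ^ 2 - A x) ^ 2 := by
      have hw2 : 0 < (w x) ^ 2 := by positivity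
      have : (f x) ^ 2 = (γ ^ 2 - A x) ^ 2 * (w x) ^ 2 := by
        simp only [hf_def]; ring
      rw [this] at h2
      exact le_of_mul_le_mul_right (by linarith [h2]) hw2
    have hApos : 0 < A x := lt_of_lt_of_le hζ0 hA
    nlinarith [h3.2, hApos, hγ2]
  have hall : ∀ᵐ x ∂μ, ∀ n : ℕ, ¬ ((n + 1 : ℝ)⁻¹ ≤ w x) := ae_all_iff.2 hsmall
  filter_upwards [hall, hwnn] with x h1 h2
  show w x = 0
  by_contra hne
  have hpos : 0 < w x := lt_of_le_of_ne h2 (Ne.symm hne)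
  obtain ⟨n, hn⟩ := exists_nat_one_div_lt hpos
  rw [one_div] at hn
  exact h1 n (le_of_lt hn)
end

section
/- Let d≥1, T>0, c>0 and γ>0. Let ρ₀ : ℝ^d → [0,∞) be measurable and suppose that for every R>0 there exists μ_R>0 such that ρ₀(z) ≥ μ_R for a.e. z with |z| ≤ R. Let ρ : (0,T]×ℝ^d → [0,∞) satisfy ρ(t,x) ≥ c ∫_{ℝ^d} G^γ_t(x−x₀) ρ₀(x₀) dx₀ for all t ∈ (0,T] and x ∈ ℝ^d. Then for every R>0 there exists m_R>0 such that ρ(t,x) ≥ m_R for all t ∈ (0,T] and all x with |x| ≤ R. -/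
open MeasureTheory Real Set Filter

noncomputable section

abbrev Euc (d : ℕ) : Type := EuclideanSpace ℝ (Fin d)

/-- The `i`-th standard basis vector of `ℝ^d`. -/
def eVec (d : ℕ) (i : Fin d) : Euc d := EuclideanSpace.single i 1

/-- Lebesgue measure on the space-time strip `(0,T) × ℝ^d`. -/
def stMeasure (d : ℕ) (T : ℝ) : Measure (ℝ × Euc d) :=
  (volume.restrict (Set.Ioo 0 T)).prod volume

/-- A test function in `C_c^∞((0,T) × ℝ^d)`. -/
def IsTestST (d : ℕ) (T : ℝ) (φ : ℝ × Euc d → ℝ) : Prop :=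
  ContDiff ℝ (⊤ : ℕ∞) φ ∧ HasCompactSupport φ ∧
    tsupport φ ⊆ Set.Ioo 0 T ×ˢ (Set.univ : Set (Euc d))

/-- `u ∈ L²((0,T);H¹(ℝ^d))` with weak spatial gradient `du`. -/
def HasWeakGradient (d : ℕ) (T : ℝ) (u : ℝ → Euc d → ℝ) (du : ℝ → Euc d → Euc d) : Prop :=
  MemLp (fun p : ℝ × Euc d => u p.1 p.2) 2 (stMeasure d T) ∧
  MemLp (fun p : ℝ × Euc d => du p.1 p.2) 2 (stMeasure d T) ∧
  ∀ φ : ℝ × Euc d → ℝ, IsTestST d T φ → ∀ i : Fin d,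
    ∫ p, u p.1 p.2 * fderiv ℝ φ p (0, eVec d i) ∂(stMeasure d T)
      = - ∫ p, du p.1 p.2 i * φ p ∂(stMeasure d T)

/-- `t ↦ u(t)` is continuous from `[0,T]` to `L²(ℝ^d)`. -/
def L2ContinuousOn (d : ℕ) (T : ℝ) (u : ℝ → Euc d → ℝ) : Prop :=
  (∀ t ∈ Set.Icc (0:ℝ) T, MemLp (u t) 2 (volume : Measure (Euc d))) ∧
  ∀ t₀ ∈ Set.Icc (0:ℝ) T,
    Tendsto (fun t => eLpNorm (fun x => u t x - u t₀ x) 2 (volume : Measure (Euc d)))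
      (nhdsWithin t₀ (Set.Icc 0 T)) (nhds 0)

/-- Weak solution of `∂ₜ u = ½ div(a ∇u)` with initial datum `u₀`,
in `C([0,T];L²) ∩ L²((0,T);H¹)`, with weak spatial gradient `du`. -/
structure IsWeakSolDiv (d : ℕ) (T : ℝ) (a : ℝ → Euc d → ℝ) (u0 : Euc d → ℝ)
    (u : ℝ → Euc d → ℝ) (du : ℝ → Euc d → Euc d) : Prop where
  contL2 : L2ContinuousOn d T u
  grad : HasWeakGradient d T u du
  weakEq : ∀ T₀ ∈ Set.Icc (0:ℝ) T, ∀ f : ℝ × Euc d → ℝ,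
    ContDiff ℝ (⊤ : ℕ∞) f → HasCompactSupport f →
    (∫ x, u T₀ x * f (T₀, x)) - (∫ x, u0 x * f (0, x))
      = ∫ p in Set.Ioc 0 T₀ ×ˢ (Set.univ : Set (Euc d)),
          (u p.1 p.2 * fderiv ℝ f p (1, 0)
            - (1/2) * a p.1 p.2 * ∑ i, du p.1 p.2 i * fderiv ℝ f p (0, eVec d i))

/-- Assumption (A0): `u₀` is a probability density in `L¹ ∩ L^∞` with finite second moment. -/
def AssumpA0 (d : ℕ) (u0 : Euc d → ℝ) : Prop :=
  Measurable u0 ∧ (∀ x, 0 ≤ u0 x) ∧ (∫ x, u0 x = 1) ∧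
    Integrable u0 (volume : Measure (Euc d)) ∧
    MemLp u0 ⊤ (volume : Measure (Euc d)) ∧
    Integrable (fun x : Euc d => ‖x‖^2 * u0 x) (volume : Measure (Euc d))

/-- Assumption (A1) together with the definition of `α`: `σ` is `C¹` on `[0,∞)`
and `α(r) = (σ²(r) r)'` there. -/
def AssumpA1 (σ α : ℝ → ℝ) : Prop :=
  ContDiffOn ℝ 1 σ (Set.Ici 0) ∧
  ∀ r ∈ Set.Ici (0:ℝ), HasDerivWithinAt (fun s => σ s ^ 2 * s) (α r) (Set.Ici 0) r

/-- The Gaussian kernel `G^γ_t(x) = (2πγ²t)^{-d/2} exp(-|x|²/(2γ²t))` on `ℝ^d`. -/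
def gaussK (d : ℕ) (γ t : ℝ) (x : Euc d) : ℝ :=
  (2 * π * γ ^ 2 * t) ^ (-(d : ℝ) / 2) * Real.exp (-‖x‖ ^ 2 / (2 * γ ^ 2 * t))

lemma gauss_cancel (d : ℕ) (γ t : ℝ) (hγ : 0 < γ) (ht : 0 < t) :
    (2 * π * γ ^ 2 * t) ^ (-(d : ℝ) / 2) * (γ * Real.sqrt t) ^ d
      = (2 * π) ^ (-(d : ℝ) / 2) := by
  have hb : (0:ℝ) < γ ^ 2 * t := by positivity
  have h1 : γ * Real.sqrt t = (γ ^ 2 * t) ^ ((1:ℝ)/2) := by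
    rw [← Real.sqrt_eq_rpow, Real.sqrt_mul (by positivity), Real.sqrt_sq hγ.le]
  have h2 : (γ * Real.sqrt t) ^ d = (γ ^ 2 * t) ^ ((d:ℝ)/2) := by
    rw [h1, ← Real.rpow_natCast ((γ ^ 2 * t) ^ ((1:ℝ)/2)) d,
      ← Real.rpow_mul hb.le]
    ring_nf
  have h3 : (2 * π * γ ^ 2 * t) ^ (-(d : ℝ) / 2)
      = (2 * π) ^ (-(d : ℝ) / 2) * (γ ^ 2 * t) ^ (-(d : ℝ) / 2) := by
    rw [show 2 * π * γ ^ 2 * t = (2 * π) * (γ ^ 2 * t) by ring,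
      Real.mul_rpow (by positivity) hb.le]
  rw [h3, h2, mul_assoc, ← Real.rpow_add hb, neg_div, neg_add_cancel,
    Real.rpow_zero, mul_one]

/-- Propagation of local lower bounds by Gaussian lower bounds:
if `ρ₀ ≥ μ_R > 0` a.e. on every ball and
`ρ(t,x) ≥ c ∫ G^γ_t(x-x₀) ρ₀(x₀) dx₀`, then `ρ` is bounded below by a positive
constant `m_R` on `(0,T] × B(0,R)` for every `R > 0`. -/
theorem stmt_14 (d : ℕ) (hd : 1 ≤ d) (T c γ : ℝ)
    (hT : 0 < T) (hc : 0 < c) (hγ : 0 < γ)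
    (ρ₀ : Euc d → ℝ) (hρ₀meas : Measurable ρ₀) (hρ₀nn : ∀ x, 0 ≤ ρ₀ x)
    (hρ₀low : ∀ R : ℝ, 0 < R → ∃ μR : ℝ, 0 < μR ∧
      ∀ᵐ z ∂(volume : Measure (Euc d)), ‖z‖ ≤ R → μR ≤ ρ₀ z)
    (ρ : ℝ → Euc d → ℝ) (hρnn : ∀ t x, 0 ≤ ρ t x)
    (hρlow : ∀ t ∈ Set.Ioc (0:ℝ) T, ∀ x : Euc d,
      ENNReal.ofReal c * ∫⁻ y, ENNReal.ofReal (gaussK d γ t (x - y) * ρ₀ y)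
        ≤ ENNReal.ofReal (ρ t x)) :
    ∀ R : ℝ, 0 < R → ∃ mR : ℝ, 0 < mR ∧
      ∀ t ∈ Set.Ioc (0:ℝ) T, ∀ x : Euc d, ‖x‖ ≤ R → mR ≤ ρ t x := by
  intro R hR
  haveI : Nonempty (Fin d) := ⟨⟨0, by omega⟩⟩
  obtain ⟨μ, hμpos, hμae⟩ := hρ₀low (R + γ * Real.sqrt T) (by positivity)
  set V : ENNReal := volume (Metric.ball (0 : Euc d) 1) with hV
  have hVpos : 0 < V := Metric.measure_ball_pos _ _ one_pos
  have hVlt : V < ⊤ := measure_ball_lt_top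
  have hVt : 0 < V.toReal := ENNReal.toReal_pos hVpos.ne' hVlt.ne
  set A : ℝ := Real.exp (-(1:ℝ)/2) * (2 * π) ^ (-(d : ℝ) / 2) with hA
  have hApos : 0 < A := by positivity
  refine ⟨c * (μ * A) * V.toReal, by positivity, ?_⟩
  rintro t ⟨ht0, htT⟩ x hx
  set r : ℝ := γ * Real.sqrt t with hr
  have hrpos : 0 < r := by positivity
  set K : ℝ := (2 * π * γ ^ 2 * t) ^ (-(d : ℝ) / 2) * Real.exp (-(1:ℝ)/2)
    with hK
  have hKpos : 0 < K := by positivity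
  -- kernel lower bound on the ball
  have hGB : ∀ y ∈ Metric.ball x r, K ≤ gaussK d γ t (x - y) := by
    intro y hy
    have hdist : ‖x - y‖ < r := by
      have := Metric.mem_ball.1 hy
      rwa [dist_eq_norm, ← norm_neg, neg_sub] at this
    have hsq : ‖x - y‖ ^ 2 ≤ γ ^ 2 * t := by
      calc ‖x - y‖ ^ 2 ≤ r ^ 2 := by
            apply sq_le_sq' (by linarith [norm_nonneg (x - y), hrpos]) hdist.le
        _ = γ ^ 2 * t := by
            rw [hr, mul_pow, Real.sq_sqrt ht0.le]
    have hexp : Real.exp (-(1:ℝ)/2) ≤ Real.exp (-‖x - y‖ ^ 2 / (2 * γ ^ 2 * t)) := by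
      apply Real.exp_le_exp.2
      rw [div_le_div_iff₀ (by norm_num) (by positivity)]
      nlinarith [sq_nonneg γ, ht0]
    exact mul_le_mul_of_nonneg_left hexp (by positivity)
  -- ball membership gives the radius bound for ρ₀
  have hball_norm : ∀ y ∈ Metric.ball x r, ‖y‖ ≤ R + γ * Real.sqrt T := by
    intro y hy
    have hd : ‖y - x‖ < r := by rwa [Metric.mem_ball, dist_eq_norm] at hy
    have hrT : r ≤ γ * Real.sqrt T := by
      apply mul_le_mul_of_nonneg_left (Real.sqrt_le_sqrt htT) hγ.le
    calc ‖y‖ = ‖y - x + x‖ := by rw [sub_add_cancel]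
      _ ≤ ‖y - x‖ + ‖x‖ := norm_add_le _ _
      _ ≤ R + γ * Real.sqrt T := by linarith
  -- main lower bound on the integral
  have key : ENNReal.ofReal (K * μ) * volume (Metric.ball x r)
      ≤ ∫⁻ y, ENNReal.ofReal (gaussK d γ t (x - y) * ρ₀ y) := by
    refine le_trans ?_ (setLIntegral_le_lintegral (Metric.ball x r) _)
    rw [← setLIntegral_const]
    refine lintegral_mono_ae ?_
    filter_upwards [ae_restrict_of_ae hμae, ae_restrict_mem measurableSet_ball]
      with y h1 h2
    refine ENNReal.ofReal_le_ofReal ?_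
    have hg : K ≤ gaussK d γ t (x - y) := hGB y h2
    have hρ : μ ≤ ρ₀ y := h1 (hball_norm y h2)
    exact mul_le_mul hg hρ hμpos.le (le_trans hKpos.le hg)
  -- compute the ball volume
  have hvol : volume (Metric.ball x r) = ENNReal.ofReal (r ^ d) * V := by
    rw [Measure.addHaar_ball volume x hrpos.le, finrank_euclideanSpace_fin]
  -- rewrite the constant
  have hconst : ENNReal.ofReal (c * (μ * A) * V.toReal)
      = ENNReal.ofReal c * (ENNReal.ofReal (K * μ) * volume (Metric.ball x r)) := by
    have hc1 : K * r ^ d = A := by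
      have h := gauss_cancel d γ t hγ ht0
      rw [hK, hr, hA]
      linear_combination (Real.exp (-(1:ℝ)/2)) * h
    have hreal : c * (μ * A) * V.toReal = c * ((K * μ) * (r ^ d * V.toReal)) := by
      rw [← hc1]; ring
    rw [hvol, hreal, ENNReal.ofReal_mul hc.le,
      ENNReal.ofReal_mul (by positivity : (0:ℝ) ≤ K * μ),
      ENNReal.ofReal_mul (by positivity : (0:ℝ) ≤ r ^ d),
      ENNReal.ofReal_toReal hVlt.ne]
  have hfin : ENNReal.ofReal (c * (μ * A) * V.toReal) ≤ ENNReal.ofReal (ρ t x) := by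
    calc ENNReal.ofReal (c * (μ * A) * V.toReal)
        = ENNReal.ofReal c * (ENNReal.ofReal (K * μ) * volume (Metric.ball x r)) :=
          hconst
      _ ≤ ENNReal.ofReal c * ∫⁻ y, ENNReal.ofReal (gaussK d γ t (x - y) * ρ₀ y) :=
          mul_le_mul_right key _
      _ ≤ ENNReal.ofReal (ρ t x) := hρlow t ⟨ht0, htT⟩ x
  exact (ENNReal.ofReal_le_ofReal_iff (hρnn t x)).1 hfin
end
end
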